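/- Let M be a real symmetric positive-definite m×m matrix (m ≥ 1). Then log det M = −∫₀^{e^{−γ}} Tr(e^{−tM} − I) dt/t − ∫_{e^{−γ}}^∞ Tr(e^{−tM}) dt/t, where γ is the Euler–Mascheroni constant, I is the m×m identity matrix, and both integrals converge absolutely. -/

import Mathlib

open MeasureTheory Filter Set
open scoped ENNReal Classical Topology RealInnerProductSpace

noncomputable section

/-- The Euclidean plane `ℝ²`. -/
abbrev Plane : Type := EuclideanSpace ℝ (Fin 2)

/-- The point of the plane corresponding to a lattice point of `ℤ²`. -/
def latticePt (p : ℤ × ℤ) : Plane :=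
  (WithLp.equiv 2 (Fin 2 → ℝ)).symm ![(p.1 : ℝ), (p.2 : ℝ)]

/-- Nearest-neighbour relation on `ℤ²` (`ℓ¹`-distance one). -/
def adjacent (p q : ℤ × ℤ) : Prop := |p.1 - q.1| + |p.2 - q.2| = 1

/-- The transition density of planar Brownian motion:
`p_s(z, w) = (4πs)⁻¹ exp(-|z-w|²/(4s))`, expressed as a function of `z - w`. -/
def gaussD (s : ℝ) (z : Plane) : ℝ := (4 * Real.pi * s)⁻¹ * Real.exp (-‖z‖ ^ 2 / (4 * s))

/-- The number of nearest-neighbour lattice paths of length `n` from `0` to `z` in `ℤ²`. -/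
def pathCount : ℕ → ℤ × ℤ → ℕ
  | 0, z => if z = 0 then 1 else 0
  | n + 1, z => pathCount n (z + (1, 0)) + pathCount n (z - (1, 0)) +
      pathCount n (z + (0, 1)) + pathCount n (z - (0, 1))

/-- Transition probability of the continuous-time simple random walk on `ℤ²` which jumps
to each of its four nearest neighbours at rate 1: probability of displacement `z` in time `t`. -/
def dKernel (t : ℝ) (z : ℤ × ℤ) : ℝ :=
  Real.exp (-(4 * t)) * ∑' n : ℕ, t ^ n / (n.factorial : ℝ) * (pathCount n z : ℝ)

/-- `P̃₀(t) = P₀[W̃_t = 0]`. -/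
def dP0 (t : ℝ) : ℝ := dKernel t 0

/-- `(P, W)` is a family of planar Brownian motions: under `P x`, the process `W` is a.s.
continuous, starts at `x`, and has independent increments with the Gaussian transition
density `gaussD`. -/
structure IsBrownian {Ω' : Type} [MeasurableSpace Ω'] (P : Plane → Measure Ω')
    (W : ℝ → Ω' → Plane) : Prop where
  prob : ∀ x, IsProbabilityMeasure (P x)
  meas : ∀ t, Measurable (W t)
  start : ∀ x, P x {ω | W 0 ω = x} = 1
  cont : ∀ x, P x {ω | Continuous fun s => W s ω} = 1
  incr : ∀ x (s t : ℝ), 0 ≤ s → s < t →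
    Measure.map (fun ω => W t ω - W s ω) (P x)
      = volume.withDensity fun z => ENNReal.ofReal (gaussD (t - s) z)
  indep : ∀ x (n : ℕ) (τ : Fin (n + 1) → ℝ), Monotone τ → 0 ≤ τ 0 →
    ProbabilityTheory.iIndepFun
      (fun (i : Fin n) ω => W (τ i.succ) ω - W (τ i.castSucc) ω) (P x)

/-- Regularity of a lattice-walk trajectory: right-constancy, left-constancy on a small
interval before each time, and jumps only to nearest neighbours. -/
def WalkRegular {Ω' : Type} (W : ℝ → Ω' → ℤ × ℤ) (ω : Ω') : Prop :=
  ∀ s : ℝ,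
    (∃ ε > 0, ∀ u ∈ Set.Ico s (s + ε), W u ω = W s ω) ∧
    (∃ ε > 0, ∀ u ∈ Set.Ioo (s - ε) s, ∀ v ∈ Set.Ioo (s - ε) s, W u ω = W v ω) ∧
    (∀ p : ℤ × ℤ, (∃ ε > 0, ∀ u ∈ Set.Ioo (s - ε) s, W u ω = p) →
      p = W s ω ∨ adjacent p (W s ω))

/-- `(P, W)` is a family of continuous-time simple random walks on `ℤ²` jumping to each of
the four nearest neighbours at rate 1: under `P x` the process starts at `x`, is a.s. a
regular jump path, and has independent increments with transition probabilities `dKernel`. -/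
structure IsLatticeWalk {Ω' : Type} [MeasurableSpace Ω'] (P : ℤ × ℤ → Measure Ω')
    (W : ℝ → Ω' → ℤ × ℤ) : Prop where
  prob : ∀ x, IsProbabilityMeasure (P x)
  meas : ∀ t, Measurable (W t)
  start : ∀ x, P x {ω | W 0 ω = x} = 1
  regular : ∀ x, P x {ω | WalkRegular W ω} = 1
  incr : ∀ x (s t : ℝ), 0 ≤ s → s < t → ∀ z : ℤ × ℤ,
    P x {ω | W t ω - W s ω = z} = ENNReal.ofReal (dKernel (t - s) z)
  indep : ∀ x (n : ℕ) (τ : Fin (n + 1) → ℝ), Monotone τ → 0 ≤ τ 0 →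
    ProbabilityTheory.iIndepFun
      (fun (i : Fin n) ω => W (τ i.succ) ω - W (τ i.castSucc) ω) (P x)

/-- Exit time `T_X := inf {s ≥ 0 : W_s ∉ X}` (equal to `∞` when the path never leaves `X`). -/
def exitTime {Ω' : Type} (W : ℝ → Ω' → Plane) (X : Set Plane) (ω : Ω') : ℝ≥0∞ :=
  sInf (ENNReal.ofReal '' {s : ℝ | 0 ≤ s ∧ W s ω ∉ X})

/-- The event `T_X > t`. -/
def survives {Ω' : Type} (W : ℝ → Ω' → Plane) (X : Set Plane) (t : ℝ) (ω : Ω') : Prop :=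
  ENNReal.ofReal t < exitTime W X ω

/-- The diagonal Dirichlet heat kernel
`P^D_X(x,x;t) := lim_{r→0⁺} (πr²)⁻¹ P_x[|W_t - x| ≤ r, T_X > t]`. -/
def PD {Ω' : Type} [MeasurableSpace Ω'] (P : Plane → Measure Ω') (W : ℝ → Ω' → Plane)
    (X : Set Plane) (x : Plane) (t : ℝ) : ℝ :=
  limUnder (𝓝[>] (0 : ℝ)) fun r : ℝ =>
    (Real.pi * r ^ 2)⁻¹ * (P x {ω | dist (W t ω) x ≤ r ∧ survives W X t ω}).toReal

/-- The event `T̃_X > t` for the lattice walk: up to time `t`, every jump of the walk is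
along an edge whose closed unit segment is contained in `X` (positions occupied during
`(0,t]` giving degenerate segments). `p` ranges over the left-limit positions. -/
def edgeSafe {Ω' : Type} (W : ℝ → Ω' → ℤ × ℤ) (X : Set Plane) (t : ℝ) (ω : Ω') : Prop :=
  ∀ s ∈ Set.Ioc (0 : ℝ) t, ∀ p : ℤ × ℤ,
    (∃ ε > 0, ∀ u ∈ Set.Ioo (s - ε) s, W u ω = p) →
    segment ℝ (latticePt p) (latticePt (W s ω)) ⊆ X

/-- The discrete Dirichlet heat kernel `P̃^D_X(x,y;t) := P_x[W̃_t = y, T̃_X > t]`. -/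
def dPDxy {Ω' : Type} [MeasurableSpace Ω'] (P : ℤ × ℤ → Measure Ω') (W : ℝ → Ω' → ℤ × ℤ)
    (X : Set Plane) (x y : ℤ × ℤ) (t : ℝ) : ℝ :=
  (P x {ω | W t ω = y ∧ edgeSafe W X t ω}).toReal

/-- The diagonal discrete Dirichlet heat kernel `P̃^D_X(x,x;t)`. -/
def dPD {Ω' : Type} [MeasurableSpace Ω'] (P : ℤ × ℤ → Measure Ω') (W : ℝ → Ω' → ℤ × ℤ)
    (X : Set Plane) (x : ℤ × ℤ) (t : ℝ) : ℝ :=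
  dPDxy P W X x x t

/-- The discrete Dirichlet Laplacian of the region `X`, as a matrix indexed by a finset `F`
(to be taken equal to the set of lattice points in `X`):
`(Δ̃_X f)(x) = 4 f(x) - Σ_y f(y)`, the sum over nearest neighbours `y` of `x` such that the
closed segment from `x` to `y` is contained in `X`. -/
def dLap (X : Set Plane) (F : Finset (ℤ × ℤ)) : Matrix F F ℝ := fun x y =>
  if x = y then 4
  else if adjacent x.1 y.1 ∧ segment ℝ (latticePt x.1) (latticePt y.1) ⊆ X then -1 else 0

/-- Entry `(x,y)` of the matrix exponential `e^M = Σ_n Mⁿ/n!`. -/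
def matExpEntry {ι : Type} [Fintype ι] [DecidableEq ι] (M : Matrix ι ι ℝ) (x y : ι) : ℝ :=
  ∑' n : ℕ, ((n.factorial : ℝ))⁻¹ * (M ^ n) x y

/-- The trace of the matrix exponential `e^M`. -/
def trExp {ι : Type} [Fintype ι] [DecidableEq ι] (M : Matrix ι ι ℝ) : ℝ :=
  ∑ x, matExpEntry M x x
/-- A polygonal domain: a bounded, connected, open subset of the plane whose boundary is a
finite disjoint union of (simple closed) polygons all of whose vertices lie in `ℤ²`.
The `k`-th boundary polygon has `len k ≥ 3` vertices `vtx k i`, indexed cyclically. -/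
structure PolygonalDomain where
  carrier : Set Plane
  isOpen : IsOpen carrier
  bounded : Bornology.IsBounded carrier
  connected : IsConnected carrier
  N : ℕ
  len : Fin N → ℕ
  three_le : ∀ k, 3 ≤ len k
  vtx : (k : Fin N) → ZMod (len k) → ℤ × ℤ
  boundary_eq : frontier carrier =
    ⋃ k, ⋃ i, segment ℝ (latticePt (vtx k i)) (latticePt (vtx k (i + 1)))
  nondegenerate : ∀ k i, vtx k i ≠ vtx k (i + 1)
  simple_adj : ∀ k i,
    segment ℝ (latticePt (vtx k i)) (latticePt (vtx k (i + 1))) ∩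
      segment ℝ (latticePt (vtx k (i + 1))) (latticePt (vtx k (i + 2)))
    = {latticePt (vtx k (i + 1))}
  simple_nonadj : ∀ k (i j : ZMod (len k)), j ≠ i → j ≠ i + 1 → j + 1 ≠ i →
    Disjoint (segment ℝ (latticePt (vtx k i)) (latticePt (vtx k (i + 1))))
      (segment ℝ (latticePt (vtx k j)) (latticePt (vtx k (j + 1))))
  comp_disjoint : ∀ k l, k ≠ l →
    Disjoint (⋃ i, segment ℝ (latticePt (vtx k i)) (latticePt (vtx k (i + 1))))
      (⋃ i, segment ℝ (latticePt (vtx l i)) (latticePt (vtx l (i + 1))))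

/-- The `i`-th closed edge of the `k`-th boundary polygon. -/
def PolygonalDomain.edge (D : PolygonalDomain) (k : Fin D.N) (i : ZMod (D.len k)) :
    Set Plane :=
  segment ℝ (latticePt (D.vtx k i)) (latticePt (D.vtx k (i + 1)))

/-- `κ(Π)`: the largest `κ > 0` such that, for every `x ∈ Π`, `B_κ(x) ∩ ∂Π` is contained in
the union of two adjacent boundary segments. -/
def PolygonalDomain.kappa (D : PolygonalDomain) : ℝ :=
  sSup {κ : ℝ | 0 < κ ∧ ∀ x ∈ D.carrier, ∃ k i,
    Metric.closedBall x κ ∩ frontier D.carrier ⊆ D.edge k i ∪ D.edge k (i + 1)}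

/-- The total perimeter of a polygonal domain. -/
def PolygonalDomain.perimeter (D : PolygonalDomain) : ℝ :=
  ∑ k : Fin D.N,
    haveI : NeZero (D.len k) := ⟨by have := D.three_le k; omega⟩
    ∑ i : ZMod (D.len k), dist (latticePt (D.vtx k i)) (latticePt (D.vtx k (i + 1)))

/-- `θ` is the interior angle of `S` at `v`: for all small `ε`, the area of `B_ε(v) ∩ S`
is `θ ε² / 2`. -/
def InteriorAngleAt (S : Set Plane) (v : Plane) (θ : ℝ) : Prop :=
  θ ∈ Set.Ioo 0 (2 * Real.pi) ∧
    ∃ ε₀ > 0, ∀ ε ∈ Set.Ioo 0 ε₀, (volume (Metric.ball v ε ∩ S)).toReal = θ * ε ^ 2 / 2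

/-- The interior angle of `S` at `v` (junk value if there is none). -/
def interiorAngle (S : Set Plane) (v : Plane) : ℝ := sSup {θ | InteriorAngleAt S v θ}

/-- The corners of `S`: boundary points at which the interior angle exists and is `≠ π`. -/
def cornersOf (S : Set Plane) : Set Plane :=
  {v | v ∈ frontier S ∧ ∃ θ, InteriorAngleAt S v θ ∧ θ ≠ Real.pi}

/-- `a₂(Π) = Σ_corners (π² - θ²) / (24 π θ)`. -/
def a2val (S : Set Plane) : ℝ :=
  ∑ᶠ v ∈ cornersOf S, (Real.pi ^ 2 - interiorAngle S v ^ 2) / (24 * Real.pi * interiorAngle S v)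

/-- `α₂(Π) = Σ_corners (π² - θ²) / (12 π θ)`. -/
def alpha2val (S : Set Plane) : ℝ :=
  ∑ᶠ v ∈ cornersOf S, (Real.pi ^ 2 - interiorAngle S v ^ 2) / (12 * Real.pi * interiorAngle S v)

/-- `a₀(Π) = |Π| / (4π)`. -/
def PolygonalDomain.a0 (D : PolygonalDomain) : ℝ := (volume D.carrier).toReal / (4 * Real.pi)

/-- `a₁(Π) = -|∂Π| / (8√π)`. -/
def PolygonalDomain.a1 (D : PolygonalDomain) : ℝ := -D.perimeter / (8 * Real.sqrt Real.pi)

/-- The scaled region `LΠ`. -/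
def scaleSet (L : ℕ) (S : Set Plane) : Set Plane := (fun z => (L : ℝ) • z) '' S

/-- `Ω⁻(δ) := {x ∈ Ω : dist(x, Ωᶜ) > δ}`. -/
def innerSet (S : Set Plane) (δ : ℝ) : Set Plane := {x ∈ S | δ < Metric.infDist x Sᶜ}

/-- `Ω⁺(δ) := {x ∈ ℝ² : dist(x, Ω) < δ}`. -/
def outerSet (S : Set Plane) (δ : ℝ) : Set Plane := {x | Metric.infDist x S < δ}

/-- The lattice points lying in `S`. -/
def latticeIn (S : Set Plane) : Set (ℤ × ℤ) := {p | latticePt p ∈ S}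

/-- The exterior boundary `∂_ext(S ∩ ℤ²)`: lattice points outside `S` with a nearest
neighbour inside `S`. -/
def extBoundary (S : Set Plane) : Set (ℤ × ℤ) :=
  {p | latticePt p ∉ S ∧ ∃ q, adjacent p q ∧ latticePt q ∈ S}

/-- The translated local neighbourhood `(B₂(x) ∩ S) - x`. -/
def shiftedNbhd (S : Set Plane) (x : Plane) : Set Plane :=
  (fun z => z - x) '' (Metric.closedBall x 2 ∩ S)

/-- The trace of the Dirichlet heat kernel, `∫_S P^D_S(x,x;t) dx`. -/
def heatTrace {Ω' : Type} [MeasurableSpace Ω'] (P : Plane → Measure Ω')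
    (W : ℝ → Ω' → Plane) (S : Set Plane) (t : ℝ) : ℝ :=
  ∫ x in S, PD P W S x t

/-- `F_S(t) := Tr e^{-tΔ_S} - c₀ t⁻¹ - c₁ t^{-1/2} - c₂ 𝟙_{[0, e^{-γ}]}(t)`. -/
def Ffun {Ω' : Type} [MeasurableSpace Ω'] (P : Plane → Measure Ω') (W : ℝ → Ω' → Plane)
    (S : Set Plane) (c0 c1 c2 t : ℝ) : ℝ :=
  heatTrace P W S t - c0 / t - c1 / Real.sqrt t
    - c2 * Set.indicator (Set.Icc 0 (Real.exp (-Real.eulerMascheroniConstant))) 1 t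

/-- `F_Π` for a polygonal domain `Π`. -/
def FPoly {Ω' : Type} [MeasurableSpace Ω'] (P : Plane → Measure Ω') (W : ℝ → Ω' → Plane)
    (D : PolygonalDomain) (t : ℝ) : ℝ :=
  Ffun P W D.carrier D.a0 D.a1 (a2val D.carrier) t

/-- `α₃(Π) := -∫₀^∞ F_Π(t) dt/t`, the logarithm of the ζ-regularized determinant. -/
def alpha3 {Ω' : Type} [MeasurableSpace Ω'] (P : Plane → Measure Ω') (W : ℝ → Ω' → Plane)
    (D : PolygonalDomain) : ℝ :=
  -∫ t in Set.Ioi (0 : ℝ), FPoly P W D t / t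

/-- `α₀ := ∫₀^∞ (𝟙_{[0,e^{-γ})}(t) - P̃₀(t)) dt/t`. -/
def alpha0 : ℝ :=
  ∫ t in Set.Ioi (0 : ℝ),
    (Set.indicator (Set.Ico 0 (Real.exp (-Real.eulerMascheroniConstant))) 1 t - dP0 t) / t

namespace LogDetAux

open Real

/-- `(e^{-λt} - 1)/t`. -/
noncomputable def Jf (lam : ℝ) : ℝ → ℝ := fun t => (Real.exp (-(lam * t)) - 1) / t

/-- `e^{-λt}/t`. -/
noncomputable def Kf (lam : ℝ) : ℝ → ℝ := fun t => Real.exp (-(lam * t)) / t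

lemma measurable_Jf (lam : ℝ) : Measurable (Jf lam) := by
  unfold Jf
  exact ((Real.measurable_exp.comp ((measurable_const.mul measurable_id').neg)).sub
    measurable_const).div measurable_id'

lemma measurable_Kf (lam : ℝ) : Measurable (Kf lam) := by
  unfold Kf
  exact (Real.measurable_exp.comp ((measurable_const.mul measurable_id').neg)).div measurable_id'

lemma intA {lam : ℝ} (x : ℝ) (hlam : 0 < lam) : IntegrableOn (Jf lam) (Ioc 0 x) := by
  refine Measure.integrableOn_of_bounded (M := lam) measure_Ioc_lt_top.ne
    (measurable_Jf lam).aestronglyMeasurable ?_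
  filter_upwards [ae_restrict_mem measurableSet_Ioc] with t ht
  have ht0 : (0:ℝ) < t := ht.1
  have hexp : Real.exp (-(lam * t)) ≤ 1 := Real.exp_le_one_iff.2 (by nlinarith)
  have hlow : 1 - Real.exp (-(lam * t)) ≤ lam * t := by
    have := Real.add_one_le_exp (-(lam * t)); linarith
  rw [Real.norm_eq_abs, Jf, abs_div, abs_of_pos ht0, abs_of_nonpos (by linarith), neg_sub,
    div_le_iff₀ ht0]
  linarith

lemma intB {lam : ℝ} {x : ℝ} (hlam : 0 < lam) (hx : 0 < x) :
    IntegrableOn (Kf lam) (Ioi x) := by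
  have h1 : IntegrableOn (fun t : ℝ => x⁻¹ * Real.exp (-(lam * t))) (Ioi x) := by
    have := (exp_neg_integrableOn_Ioi x hlam).const_mul x⁻¹
    simp only [neg_mul] at this
    exact this
  refine Integrable.mono' h1 (measurable_Kf lam).aestronglyMeasurable ?_
  filter_upwards [ae_restrict_mem measurableSet_Ioi] with t ht
  have htpos : 0 < t := hx.trans ht
  rw [Real.norm_eq_abs, Kf, abs_div, abs_of_pos (Real.exp_pos _), abs_of_pos htpos,
    div_le_iff₀ htpos]
  have h2 : 1 ≤ x⁻¹ * t := by
    rw [← div_eq_inv_mul]; exact (one_le_div hx).2 ht.le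
  nlinarith [Real.exp_pos (-(lam * t))]

/-- FTC on `(0, b]` with a limit condition at `0⁺`. -/
lemma integral_Ioc_of_hasDerivAt_of_tendsto {F F' : ℝ → ℝ} {b : ℝ} (hb : 0 < b)
    (hderiv : ∀ x ∈ Ioc (0:ℝ) b, HasDerivAt F (F' x) x)
    (hint : IntegrableOn F' (Ioc 0 b))
    (hlim : Tendsto F (nhdsWithin 0 (Ioi (0:ℝ))) (nhds 0)) :
    ∫ x in Ioc (0:ℝ) b, F' x = F b := by
  set u : ℕ → ℝ := fun n => b / (n + 2) with hu
  have hu0 : ∀ n, 0 < u n := fun n => div_pos hb (by positivity)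
  have hub : ∀ n, u n ≤ b := by
    intro n
    rw [hu]
    apply div_le_self hb.le
    have : (0:ℝ) ≤ (n:ℝ) := Nat.cast_nonneg n
    linarith
  have hulim : Tendsto u atTop (nhds 0) := by
    apply Filter.Tendsto.div_atTop (tendsto_const_nhds)
    exact tendsto_atTop_add_const_right _ 2 tendsto_natCast_atTop_atTop
  have cover : AECover (volume.restrict (Ioc 0 b)) atTop (fun n => Ici (u n)) :=
    { ae_eventually_mem := by
        filter_upwards [ae_restrict_mem measurableSet_Ioc] with x hx
        exact hulim.eventually (eventually_le_nhds hx.1)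
      measurableSet := fun n => measurableSet_Ici }
  have h1 := cover.integral_tendsto_of_countably_generated hint
  have key : ∀ n, ∫ x in Ici (u n), F' x ∂(volume.restrict (Ioc 0 b)) = F b - F (u n) := by
    intro n
    rw [Measure.restrict_restrict measurableSet_Ici]
    have hseteq : Ici (u n) ∩ Ioc 0 b = Icc (u n) b := by
      ext y
      simp only [mem_inter_iff, mem_Ici, mem_Ioc, mem_Icc]
      constructor
      · rintro ⟨h1, _, h3⟩; exact ⟨h1, h3⟩
      · rintro ⟨h1, h2⟩; exact ⟨h1, lt_of_lt_of_le (hu0 n) h1, h2⟩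
    rw [hseteq, MeasureTheory.integral_Icc_eq_integral_Ioc,
      ← intervalIntegral.integral_of_le (hub n)]
    exact intervalIntegral.integral_eq_sub_of_hasDerivAt_of_le (hub n)
      (fun y hy => (hderiv y ⟨lt_of_lt_of_le (hu0 n) hy.1, hy.2⟩).continuousAt.continuousWithinAt)
      (fun y hy => hderiv y ⟨(hu0 n).trans hy.1, hy.2.le⟩)
      ((intervalIntegrable_iff_integrableOn_Ioc_of_le (hub n)).2
        (hint.mono_set (Ioc_subset_Ioc_left (hu0 n).le)))
  have h2 : Tendsto (fun n => F b - F (u n)) atTop (nhds (F b - 0)) :=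
    tendsto_const_nhds.sub (hlim.comp
      (tendsto_nhdsWithin_of_tendsto_nhds_of_eventually_within _ hulim
        (Filter.Eventually.of_forall fun n => hu0 n)))
  simp only [key] at h1
  have := tendsto_nhds_unique h1 h2
  simpa using this

lemma integrableOn_log_Ioc : IntegrableOn Real.log (Ioc (0:ℝ) 1) := by
  have hrp : IntegrableOn (fun t : ℝ => 2 * t ^ (-(1:ℝ)/2)) (Ioc (0:ℝ) 1) :=
    ((intervalIntegrable_iff_integrableOn_Ioc_of_le zero_le_one).1
      (intervalIntegral.intervalIntegrable_rpow' (by norm_num))).const_mul 2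
  refine Integrable.mono' hrp Real.measurable_log.aestronglyMeasurable ?_
  filter_upwards [ae_restrict_mem measurableSet_Ioc] with t ht
  have ht0 : (0:ℝ) < t := ht.1
  have h2 : Real.log (t ^ (-(1:ℝ)/2)) ≤ t ^ (-(1:ℝ)/2) := by
    have h3 := Real.log_le_sub_one_of_pos (Real.rpow_pos_of_pos ht0 (-(1:ℝ)/2))
    linarith
  rw [Real.log_rpow ht0] at h2
  rw [Real.norm_eq_abs, abs_of_nonpos (Real.log_nonpos ht0.le ht.2)]
  linarith

lemma intExpLog1 : IntegrableOn (fun t => Real.exp (-t) * Real.log t) (Ioc (0:ℝ) 1) := by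
  refine Integrable.mono' integrableOn_log_Ioc.abs
    ((Real.measurable_exp.comp measurable_neg).mul Real.measurable_log).aestronglyMeasurable ?_
  filter_upwards [ae_restrict_mem measurableSet_Ioc] with t ht
  have h1 : Real.exp (-t) ≤ 1 := Real.exp_le_one_iff.2 (by linarith [ht.1])
  rw [Real.norm_eq_abs, abs_mul, abs_of_pos (Real.exp_pos _)]
  have h2 := abs_nonneg (Real.log t)
  have : Real.exp (-t) * |Real.log t| ≤ 1 * |Real.log t| :=
    mul_le_mul_of_nonneg_right h1 h2
  simpa [abs_abs] using this

lemma intExpLog2 : IntegrableOn (fun t => Real.exp (-t) * Real.log t) (Ioi (1:ℝ)) := by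
  have h1 : IntegrableOn (fun t : ℝ => Real.exp (-t) * t ^ ((2:ℝ) - 1)) (Ioi 0) :=
    Real.GammaIntegral_convergent (by norm_num)
  refine Integrable.mono' (h1.mono_set (Ioi_subset_Ioi zero_le_one))
    ((Real.measurable_exp.comp measurable_neg).mul Real.measurable_log).aestronglyMeasurable ?_
  filter_upwards [ae_restrict_mem measurableSet_Ioi] with t ht
  have ht1 : (1:ℝ) < t := ht
  have hlog : |Real.log t| ≤ t := by
    rw [abs_of_nonneg (Real.log_nonneg ht1.le)]
    have := Real.log_le_sub_one_of_pos (by linarith : (0:ℝ) < t)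
    linarith
  rw [Real.norm_eq_abs, abs_mul, abs_of_pos (Real.exp_pos _)]
  have h2 : t ^ ((2:ℝ) - 1) = t := by norm_num
  rw [h2]
  nlinarith [Real.exp_pos (-t)]

lemma intOneSub : IntegrableOn (fun t => (1 - Real.exp (-t)) / t) (Ioc (0:ℝ) 1) := by
  have h : (fun t : ℝ => (1 - Real.exp (-t)) / t) = fun t => -(Jf 1 t) := by
    funext t; simp only [Jf, one_mul]; rw [← neg_div, neg_sub]
  rw [h]
  exact (intA 1 one_pos).neg

lemma hgamma : ∫ t in Ioi (0:ℝ), Real.exp (-t) * Real.log t = -Real.eulerMascheroniConstant := by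
  have hC := Complex.hasDerivAt_GammaIntegral (s := 1) (by norm_num)
  have hval : (∫ t : ℝ in Ioi 0, (t:ℂ) ^ ((1:ℂ) - 1) * (Real.log t * Real.exp (-t)))
      = ((∫ t in Ioi (0:ℝ), Real.exp (-t) * Real.log t : ℝ) : ℂ) := by
    calc ∫ t : ℝ in Ioi 0, (t:ℂ) ^ ((1:ℂ) - 1) * (Real.log t * Real.exp (-t))
        = ∫ t in Ioi (0:ℝ), ((Real.exp (-t) * Real.log t : ℝ) : ℂ) := by
          refine setIntegral_congr_fun measurableSet_Ioi fun t ht => ?_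
          rw [sub_self, Complex.cpow_zero, one_mul]
          push_cast
          ring
      _ = ((∫ t in Ioi (0:ℝ), Real.exp (-t) * Real.log t : ℝ) : ℂ) := integral_ofReal
  rw [hval] at hC
  have hC' : HasDerivAt Complex.GammaIntegral
      (((∫ t in Ioi (0:ℝ), Real.exp (-t) * Real.log t : ℝ) : ℂ)) ((1:ℝ):ℂ) := by
    simpa using hC
  have hR := hC'.real_of_complex
  have hEq : (fun x : ℝ => (Complex.GammaIntegral x).re) =ᶠ[nhds (1:ℝ)] Real.Gamma := by
    filter_upwards [eventually_gt_nhds (by norm_num : (0:ℝ) < 1)] with x hx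
    rw [Complex.GammaIntegral_ofReal, Complex.ofReal_re, ← Real.Gamma_eq_integral hx]
  have hR' : HasDerivAt Real.Gamma (∫ t in Ioi (0:ℝ), Real.exp (-t) * Real.log t) 1 := by
    refine HasDerivAt.congr_of_eventuallyEq ?_ hEq.symm
    simpa using hR
  exact hR'.unique Real.hasDerivAt_Gamma_one

lemma hE3 : ∫ t in Ioc (0:ℝ) 1, Real.exp (-t) * Real.log t = ∫ t in Ioc (0:ℝ) 1, Jf 1 t := by
  set F : ℝ → ℝ := fun t => (1 - Real.exp (-t)) * Real.log t with hF
  set F' : ℝ → ℝ := fun t => Real.exp (-t) * Real.log t + (1 - Real.exp (-t)) / t with hF'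
  have hFd : ∀ x ∈ Ioc (0:ℝ) 1, HasDerivAt F (F' x) x := by
    intro x hx
    have h1 : HasDerivAt (fun t : ℝ => 1 - Real.exp (-t)) (Real.exp (-x)) x := by
      have h0 := ((Real.hasDerivAt_exp (-x)).comp x (hasDerivAt_neg x)).const_sub 1
      simpa using h0
    have h2 := Real.hasDerivAt_log (ne_of_gt hx.1)
    have h3 : HasDerivAt (fun t => (1 - Real.exp (-t)) * Real.log t) _ x := h1.mul h2
    simpa [hF, hF', div_eq_mul_inv] using h3
  have hFint : IntegrableOn F' (Ioc 0 1) := intExpLog1.add intOneSub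
  have hFlim : Tendsto F (nhdsWithin 0 (Ioi (0:ℝ))) (nhds 0) := by
    have ha : Tendsto (fun t : ℝ => |Real.log t * t|) (nhdsWithin 0 (Ioi (0:ℝ))) (nhds 0) := by
      have h := tendsto_log_mul_rpow_nhdsGT_zero (r := 1) one_pos
      simp only [Real.rpow_one] at h
      simpa using h.abs
    refine squeeze_zero_norm' ?_ ha
    filter_upwards [self_mem_nhdsWithin] with t ht
    have ht0 : (0:ℝ) < t := ht
    have hexp : Real.exp (-t) ≤ 1 := Real.exp_le_one_iff.2 (by linarith)
    have hsub : 1 - Real.exp (-t) ≤ t := by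
      have := Real.add_one_le_exp (-t); linarith
    rw [Real.norm_eq_abs, hF, abs_mul, abs_mul]
    have h1 : |1 - Real.exp (-t)| ≤ |t| := by
      rw [abs_of_nonneg (by linarith), abs_of_pos ht0]; exact hsub
    calc |1 - Real.exp (-t)| * |Real.log t| ≤ |t| * |Real.log t| :=
          mul_le_mul_of_nonneg_right h1 (abs_nonneg _)
      _ = |Real.log t| * |t| := mul_comm _ _
  have h0 := integral_Ioc_of_hasDerivAt_of_tendsto one_pos hFd hFint hFlim
  have hF1 : F 1 = 0 := by simp [hF]
  rw [hF1] at h0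
  have hsplit : ∫ t in Ioc (0:ℝ) 1, F' t
      = (∫ t in Ioc (0:ℝ) 1, Real.exp (-t) * Real.log t)
        + ∫ t in Ioc (0:ℝ) 1, (1 - Real.exp (-t)) / t :=
    integral_add intExpLog1 intOneSub
  have hneg : ∫ t in Ioc (0:ℝ) 1, (1 - Real.exp (-t)) / t
      = -∫ t in Ioc (0:ℝ) 1, Jf 1 t := by
    have h : (fun t : ℝ => (1 - Real.exp (-t)) / t) = fun t => -(Jf 1 t) := by
      funext t; simp only [Jf, one_mul]; rw [← neg_div, neg_sub]
    rw [h, integral_neg]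
  rw [hneg] at hsplit
  linarith [hsplit, h0]

lemma intK1 : IntegrableOn (fun t => Real.exp (-t) / t) (Ioi (1:ℝ)) := by
  have h := intB (lam := 1) (x := 1) one_pos one_pos
  have heq : (fun t : ℝ => Real.exp (-t) / t) = Kf 1 := by
    funext t; simp [Kf]
  rw [heq]; exact h

lemma hE4 : ∫ t in Ioi (1:ℝ), Real.exp (-t) * Real.log t = ∫ t in Ioi (1:ℝ), Kf 1 t := by
  set G : ℝ → ℝ := fun t => -(Real.exp (-t) * Real.log t) with hG
  set G' : ℝ → ℝ := fun t => Real.exp (-t) * Real.log t - Real.exp (-t) / t with hG'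
  have hGd : ∀ x ∈ Ici (1:ℝ), HasDerivAt G (G' x) x := by
    intro x hx
    have hx0 : (0:ℝ) < x := lt_of_lt_of_le one_pos hx
    have h1 : HasDerivAt (fun t : ℝ => Real.exp (-t)) (-Real.exp (-x)) x := by
      have h : HasDerivAt (fun t : ℝ => Real.exp (-t)) (Real.exp (-x) * -1) x :=
        (Real.hasDerivAt_exp (-x)).comp x (hasDerivAt_neg x)
      simpa using h
    have h2 := (h1.mul (Real.hasDerivAt_log (ne_of_gt hx0))).neg
    have heq : -(-Real.exp (-x) * Real.log x + Real.exp (-x) * x⁻¹) = G' x := by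
      rw [hG']; field_simp; ring
    rw [heq] at h2
    exact h2
  have hGint : IntegrableOn G' (Ioi 1) := intExpLog2.sub intK1
  have hGlim : Tendsto G atTop (nhds 0) := by
    have ha : Tendsto (fun t : ℝ => t * Real.exp (-t)) atTop (nhds 0) := by
      simpa using Real.tendsto_pow_mul_exp_neg_atTop_nhds_zero 1
    refine squeeze_zero_norm' ?_ ha
    filter_upwards [eventually_ge_atTop (1:ℝ)] with t ht
    rw [hG, norm_neg, Real.norm_eq_abs, abs_mul, abs_of_pos (Real.exp_pos _),
      abs_of_nonneg (Real.log_nonneg ht)]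
    have hlog : Real.log t ≤ t := by
      have := Real.log_le_sub_one_of_pos (by linarith : (0:ℝ) < t); linarith
    nlinarith [Real.exp_pos (-t)]
  have h0 := integral_Ioi_of_hasDerivAt_of_tendsto' hGd hGint hGlim
  have hG1 : G 1 = 0 := by simp [hG]
  rw [hG1, sub_zero] at h0
  have hsplit : ∫ t in Ioi (1:ℝ), G' t
      = (∫ t in Ioi (1:ℝ), Real.exp (-t) * Real.log t) - ∫ t in Ioi (1:ℝ), Real.exp (-t) / t :=
    integral_sub intExpLog2 intK1
  have hK : (∫ t in Ioi (1:ℝ), Real.exp (-t) / t) = ∫ t in Ioi (1:ℝ), Kf 1 t := by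
    have heq : (fun t : ℝ => Real.exp (-t) / t) = Kf 1 := by funext t; simp [Kf]
    rw [heq]
  linarith [hsplit, h0, hK]

lemma gval_one :
    -(∫ t in Ioc (0:ℝ) 1, Jf 1 t) - ∫ t in Ioi (1:ℝ), Kf 1 t
      = Real.eulerMascheroniConstant := by
  have hsplitall : ∫ t in Ioi (0:ℝ), Real.exp (-t) * Real.log t
      = (∫ t in Ioc (0:ℝ) 1, Real.exp (-t) * Real.log t)
        + ∫ t in Ioi (1:ℝ), Real.exp (-t) * Real.log t := by
    rw [← Set.Ioc_union_Ioi_eq_Ioi (zero_le_one (α := ℝ))]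
    exact setIntegral_union (Set.disjoint_left.2 fun x hx hx' => absurd hx.2 (not_le.2 hx'))
      measurableSet_Ioi intExpLog1 intExpLog2
  have := hgamma
  rw [hsplitall, hE3, hE4] at this
  linarith

lemma shift {c d : ℝ} (hc : 0 < c) (hcd : c ≤ d) :
    (-(∫ t in Ioc (0:ℝ) d, Jf 1 t) - ∫ t in Ioi d, Kf 1 t)
      = (-(∫ t in Ioc (0:ℝ) c, Jf 1 t) - ∫ t in Ioi c, Kf 1 t)
        + (Real.log d - Real.log c) := by
  have hd : 0 < d := hc.trans_le hcd
  have hJmid : IntegrableOn (Jf 1) (Ioc c d) :=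
    (intA d one_pos).mono_set (Ioc_subset_Ioc_left hc.le)
  have hKmid : IntegrableOn (Kf 1) (Ioc c d) :=
    (intB one_pos hc).mono_set Ioc_subset_Ioi_self
  have hJ : ∫ t in Ioc (0:ℝ) d, Jf 1 t
      = (∫ t in Ioc (0:ℝ) c, Jf 1 t) + ∫ t in Ioc c d, Jf 1 t := by
    rw [← Set.Ioc_union_Ioc_eq_Ioc hc.le hcd]
    exact setIntegral_union (Set.Ioc_disjoint_Ioc_of_le le_rfl) measurableSet_Ioc
      (intA c one_pos) hJmid
  have hK : ∫ t in Ioi c, Kf 1 t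
      = (∫ t in Ioc c d, Kf 1 t) + ∫ t in Ioi d, Kf 1 t := by
    rw [← Set.Ioc_union_Ioi_eq_Ioi hcd]
    exact setIntegral_union (Set.disjoint_left.2 fun x hx hx' => absurd hx.2 (not_le.2 hx'))
      measurableSet_Ioi hKmid (intB one_pos hd)
  have hmid : ∫ t in Ioc c d, (Kf 1 t - Jf 1 t) = Real.log d - Real.log c := by
    have heq : EqOn (fun t => Kf 1 t - Jf 1 t) (fun t => 1 / t) (Ioc c d) := by
      intro t ht
      have ht0 : t ≠ 0 := (hc.trans ht.1).ne'
      simp only [Kf, Jf, div_sub_div_same, sub_sub_cancel]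
    rw [setIntegral_congr_fun measurableSet_Ioc heq, ← intervalIntegral.integral_of_le hcd,
      integral_one_div (by rw [Set.uIcc_of_le hcd]; rintro ⟨h1, h2⟩; linarith),
      Real.log_div hd.ne' hc.ne']
  have hmid' : ∫ t in Ioc c d, (Kf 1 t - Jf 1 t)
      = (∫ t in Ioc c d, Kf 1 t) - ∫ t in Ioc c d, Jf 1 t := integral_sub hKmid hJmid
  rw [hmid'] at hmid
  linarith [hJ, hK, hmid]

lemma scaleJ {lam x : ℝ} (hl : 0 < lam) (hx : 0 ≤ x) :
    ∫ t in Ioc (0:ℝ) x, Jf lam t = ∫ t in Ioc (0:ℝ) (lam * x), Jf 1 t := by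
  have h1 : Jf lam = fun t => (fun u => lam * Jf 1 u) (lam * t) := by
    funext t
    by_cases ht : t = 0
    · simp [Jf, ht]
    · simp only [Jf, one_mul]
      rw [mul_div_assoc']
      exact (mul_div_mul_left _ _ hl.ne').symm
  rw [← intervalIntegral.integral_of_le hx,
    ← intervalIntegral.integral_of_le (by positivity : (0:ℝ) ≤ lam * x), h1,
    intervalIntegral.integral_comp_mul_left (fun u => lam * Jf 1 u) hl.ne', mul_zero,
    intervalIntegral.integral_const_mul, smul_eq_mul, inv_mul_cancel_left₀ hl.ne']

lemma scaleK {lam x : ℝ} (hl : 0 < lam) (hx : 0 < x) :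
    ∫ t in Ioi x, Kf lam t = ∫ t in Ioi (lam * x), Kf 1 t := by
  have h1 : Kf lam = fun t => (fun u => lam * Kf 1 u) (lam * t) := by
    funext t
    by_cases ht : t = 0
    · simp [Kf, ht]
    · simp only [Kf, one_mul]
      rw [mul_div_assoc']
      exact (mul_div_mul_left _ _ hl.ne').symm
  rw [h1, integral_comp_mul_left_Ioi (fun u => lam * Kf 1 u) x hl, smul_eq_mul,
    MeasureTheory.integral_const_mul, inv_mul_cancel_left₀ hl.ne']

/-- The key scalar identity. -/
lemma scalar_key {lam : ℝ} (hl : 0 < lam) :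
    -(∫ t in Ioc (0:ℝ) (Real.exp (-Real.eulerMascheroniConstant)), Jf lam t)
      - ∫ t in Ioi (Real.exp (-Real.eulerMascheroniConstant)), Kf lam t = Real.log lam := by
  set ea : ℝ := Real.exp (-Real.eulerMascheroniConstant) with hea
  have ha : 0 < ea := Real.exp_pos _
  rw [scaleJ hl ha.le, scaleK hl ha]
  set y := lam * ea with hy
  have hy0 : 0 < y := mul_pos hl ha
  have hcase : -(∫ t in Ioc (0:ℝ) y, Jf 1 t) - ∫ t in Ioi y, Kf 1 t
      = Real.eulerMascheroniConstant + Real.log y := by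
    rcases le_total 1 y with h | h
    · have h1 := shift one_pos h
      rw [gval_one] at h1
      rw [h1]
      simp [Real.log_one]
    · have h1 := shift hy0 h
      rw [gval_one] at h1
      rw [Real.log_one] at h1
      linarith
  rw [hcase, hy, Real.log_mul hl.ne' ha.ne', hea, Real.log_exp]
  ring

end LogDetAux

namespace LogDetAux

lemma trExp_conj_diag {m : ℕ} (U : Matrix (Fin m) (Fin m) ℝ)
    (hU1 : U * star U = 1) (hU2 : star U * U = 1) (v : Fin m → ℝ) :
    trExp (U * Matrix.diagonal v * star U) = ∑ i, Real.exp (v i) := by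
  have hconj_pow : ∀ k : ℕ,
      (U * Matrix.diagonal v * star U) ^ k = U * Matrix.diagonal v ^ k * star U := by
    intro k
    induction k with
    | zero => simp [pow_zero, hU1]
    | succ k ih =>
      rw [pow_succ, ih, pow_succ]
      simp only [mul_assoc]
      rw [← mul_assoc (star U) U, hU2, one_mul]
  have hentry : ∀ x : Fin m, matExpEntry (U * Matrix.diagonal v * star U) x x
      = ∑ j, (U x j * U x j) * Real.exp (v j) := by
    intro x
    have h2 : ∀ n : ℕ, ((U * Matrix.diagonal v * star U) ^ n) x x
        = ∑ j, (U x j * U x j) * v j ^ n := by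
      intro n
      rw [hconj_pow n, Matrix.diagonal_pow, Matrix.mul_apply]
      refine Finset.sum_congr rfl fun j _ => ?_
      rw [Matrix.mul_diagonal, Matrix.star_apply, star_trivial]
      simp only [Pi.pow_apply]
      ring
    have hsum : ∀ j : Fin m,
        Summable (fun n : ℕ => ((n.factorial : ℝ))⁻¹ * ((U x j * U x j) * v j ^ n)) := by
      intro j
      have h := (Real.summable_pow_div_factorial (v j)).mul_left (U x j * U x j)
      refine h.congr fun n => ?_
      rw [div_eq_mul_inv]
      ring
    simp only [matExpEntry, h2]
    calc ∑' n : ℕ, ((n.factorial : ℝ))⁻¹ * ∑ j, (U x j * U x j) * v j ^ n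
        = ∑' n : ℕ, ∑ j, ((n.factorial : ℝ))⁻¹ * ((U x j * U x j) * v j ^ n) := by
          exact tsum_congr fun n => by rw [Finset.mul_sum]
      _ = ∑ j, ∑' n : ℕ, ((n.factorial : ℝ))⁻¹ * ((U x j * U x j) * v j ^ n) :=
          Summable.tsum_finsetSum fun j _ => hsum j
      _ = ∑ j, (U x j * U x j) * Real.exp (v j) := by
          refine Finset.sum_congr rfl fun j _ => ?_
          have hexp : Real.exp (v j) = ∑' n : ℕ, ((n.factorial : ℝ))⁻¹ * v j ^ n := by
            rw [Real.exp_eq_exp_ℝ, NormedSpace.exp_eq_tsum ℝ]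
            simp [smul_eq_mul]
          rw [hexp, ← tsum_mul_left]
          exact tsum_congr fun n => by ring
  have hcol : ∀ j, (∑ x, U x j * U x j) = 1 := by
    intro j
    have h := congrFun (congrFun hU2 j) j
    rw [Matrix.mul_apply] at h
    simp only [Matrix.star_apply, star_trivial, Matrix.one_apply_eq] at h
    exact h
  simp only [trExp, hentry]
  rw [Finset.sum_comm]
  refine Finset.sum_congr rfl fun j _ => ?_
  rw [← Finset.sum_mul, hcol j, one_mul]

end LogDetAux

/-- For a real symmetric positive-definite `m × m` matrix `M` (`m ≥ 1`),
`log det M = -∫₀^{e^{-γ}} Tr(e^{-tM} - I) dt/t - ∫_{e^{-γ}}^∞ Tr(e^{-tM}) dt/t`,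
both integrals being absolutely convergent. -/
theorem log_det_eq_heat_trace_integrals (m : ℕ) (hm : 1 ≤ m)
    (M : Matrix (Fin m) (Fin m) ℝ) (hsym : M.IsSymm) (hpd : M.PosDef) :
    IntegrableOn (fun t : ℝ => (trExp (-(t • M)) - (m : ℝ)) / t)
      (Set.Ioc 0 (Real.exp (-Real.eulerMascheroniConstant))) volume ∧
    IntegrableOn (fun t : ℝ => trExp (-(t • M)) / t)
      (Set.Ioi (Real.exp (-Real.eulerMascheroniConstant))) volume ∧
    Real.log M.det =
      -(∫ t in Set.Ioc (0 : ℝ) (Real.exp (-Real.eulerMascheroniConstant)),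
          (trExp (-(t • M)) - (m : ℝ)) / t)
        - ∫ t in Set.Ioi (Real.exp (-Real.eulerMascheroniConstant)),
            trExp (-(t • M)) / t := by
  classical
  have hH : M.IsHermitian := hpd.1
  set lam : Fin m → ℝ := hH.eigenvalues with hlamdef
  have hlampos : ∀ i, 0 < lam i := fun i => hpd.eigenvalues_pos i
  set U : Matrix (Fin m) (Fin m) ℝ := (hH.eigenvectorUnitary : Matrix (Fin m) (Fin m) ℝ)
    with hUdef
  have hUmem := hH.eigenvectorUnitary.2
  have hU1 : U * star U = 1 := Matrix.mem_unitaryGroup_iff.1 hUmem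
  have hU2 : star U * U = 1 := Matrix.mem_unitaryGroup_iff'.1 hUmem
  have hspec : M = U * Matrix.diagonal lam * star U := by
    have h := hH.spectral_theorem
    simpa [RCLike.ofReal_real_eq_id, Function.id_comp] using h
  have hN : ∀ t : ℝ, -(t • M) = U * Matrix.diagonal (fun i => -(lam i * t)) * star U := by
    intro t
    have h1 : -(t • Matrix.diagonal lam) = Matrix.diagonal (fun i => -(lam i * t)) := by
      ext i j
      by_cases h : i = j <;>
        simp [Matrix.diagonal_apply, h, Matrix.neg_apply, Matrix.smul_apply, smul_eq_mul,
          mul_comm]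
    calc -(t • M) = -(t • (U * Matrix.diagonal lam * star U)) := by rw [← hspec]
      _ = U * (-(t • Matrix.diagonal lam)) * star U := by
          simp only [mul_neg, neg_mul, mul_smul_comm, smul_mul_assoc]
      _ = U * Matrix.diagonal (fun i => -(lam i * t)) * star U := by rw [h1]
  have htr : ∀ t : ℝ, trExp (-(t • M)) = ∑ i, Real.exp (-(lam i * t)) := by
    intro t
    rw [hN t, LogDetAux.trExp_conj_diag U hU1 hU2]
  have hfun1 : (fun t : ℝ => (trExp (-(t • M)) - (m : ℝ)) / t)
      = fun t => ∑ i, LogDetAux.Jf (lam i) t := by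
    funext t
    rw [htr t]
    have hm : (m : ℝ) = ∑ _i : Fin m, (1 : ℝ) := by simp
    rw [hm, ← Finset.sum_sub_distrib, Finset.sum_div]
    rfl
  have hfun2 : (fun t : ℝ => trExp (-(t • M)) / t)
      = fun t => ∑ i, LogDetAux.Kf (lam i) t := by
    funext t
    rw [htr t, Finset.sum_div]
    rfl
  have hint1 : IntegrableOn (fun t : ℝ => (trExp (-(t • M)) - (m : ℝ)) / t)
      (Set.Ioc 0 (Real.exp (-Real.eulerMascheroniConstant))) volume := by
    rw [hfun1]
    exact integrable_finset_sum _ fun i _ => LogDetAux.intA _ (hlampos i)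
  have hint2 : IntegrableOn (fun t : ℝ => trExp (-(t • M)) / t)
      (Set.Ioi (Real.exp (-Real.eulerMascheroniConstant))) volume := by
    rw [hfun2]
    exact integrable_finset_sum _ fun i _ => LogDetAux.intB (hlampos i) (Real.exp_pos _)
  refine ⟨hint1, hint2, ?_⟩
  have hdet : Real.log M.det = ∑ i, Real.log (lam i) := by
    have h : M.det = ∏ i, lam i := by simpa using hH.det_eq_prod_eigenvalues
    rw [h, Real.log_prod fun i _ => (hlampos i).ne']
  rw [hdet, hfun1, hfun2,
    integral_finset_sum _ (fun i _ => LogDetAux.intA _ (hlampos i)),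
    integral_finset_sum _ (fun i _ => LogDetAux.intB (hlampos i) (Real.exp_pos _)),
    ← Finset.sum_neg_distrib, ← Finset.sum_sub_distrib]
  exact Finset.sum_congr rfl fun i _ => (LogDetAux.scalar_key (hlampos i)).symm
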